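/- Let n ≥ 2 and let s ∈ C with s ≠ 0. Then the quotient ring C[z,w]/(n z^{n-1} + w^2, 2zw - s) is a C-vector space of dimension n+1. -/

import Mathlib

open MvPolynomial

/-- Let `n ≥ 2` and `s ∈ ℂ` with `s ≠ 0`.  Then the quotient ring
`ℂ[z,w]/(n z^{n-1} + w², 2zw - s)` is a `ℂ`-vector space of dimension `n+1`. -/
theorem stmt_14 (n : ℕ) (hn : 2 ≤ n) (s : ℂ) (hs : s ≠ 0) :
    letI I : Ideal (MvPolynomial (Fin 2) ℂ) :=
      Ideal.span {C ((n : ℕ) : ℂ) * X 0 ^ (n - 1) + X 1 ^ 2, C 2 * X 0 * X 1 - C s}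
    Module.finrank ℂ (MvPolynomial (Fin 2) ℂ ⧸ I) = n + 1 := by
  obtain ⟨m, rfl⟩ : ∃ m, n = m + 2 := ⟨n - 2, by omega⟩
  set N : ℂ := ((m + 2 : ℕ) : ℂ) with hNdef
  have hN : N ≠ 0 := by
    rw [hNdef]
    exact_mod_cast Nat.succ_ne_zero (m + 1)
  set c : ℂ := s ^ 2 / (4 * N) with hcdef
  set d : ℂ := -2 * N / s with hddef
  set g : Polynomial ℂ := Polynomial.X ^ (m + 3) + Polynomial.C c with hgdef
  set a : MvPolynomial (Fin 2) ℂ := C ((m + 2 : ℕ) : ℂ) * X 0 ^ (m + 2 - 1) + X 1 ^ 2 with hadef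
  set b : MvPolynomial (Fin 2) ℂ := C 2 * X 0 * X 1 - C s with hbdef
  set I : Ideal (MvPolynomial (Fin 2) ℂ) := Ideal.span {a, b} with hIdef
  have hsub : m + 2 - 1 = m + 1 := rfl
  -- key ideal memberships
  have mem1 : (X 0 : MvPolynomial (Fin 2) ℂ) ^ (m + 3) + C c ∈ I := by
    rw [hIdef, Ideal.mem_span_pair]
    refine ⟨C 2 * C 2 * C (1 / (4 * N)) * X 0 ^ 2,
      -(C (1 / (4 * N)) * (C 2 * X 0 * X 1 + C s)), ?_⟩
    have h1 : (C 2 * C 2 * C (1 / (4 * N)) * C N : MvPolynomial (Fin 2) ℂ) = 1 := by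
      rw [← C_mul, ← C_mul, ← C_mul, ← C_1]
      congr 1
      rw [one_div, show (2:ℂ) * 2 * (4 * N)⁻¹ * N = (4 * N) * (4 * N)⁻¹ by ring,
        mul_inv_cancel₀ (mul_ne_zero (by norm_num) hN)]
    have h2 : (C (1 / (4 * N)) * C s * C s : MvPolynomial (Fin 2) ℂ) = C c := by
      rw [← C_mul, ← C_mul]
      congr 1; rw [hcdef]; rw [one_div]; field_simp
    rw [hadef, hbdef, hsub]
    linear_combination h1 * X 0 ^ (m + 3) + h2
  have mem2 : (X 1 : MvPolynomial (Fin 2) ℂ) - C d * X 0 ^ (m + 2) ∈ I := by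
    rw [hIdef, Ideal.mem_span_pair]
    refine ⟨C 2 * C (1 / s) * X 0, -(C (1 / s) * X 1), ?_⟩
    have h1 : (C (1 / s) * C s : MvPolynomial (Fin 2) ℂ) = 1 := by
      rw [← C_mul, ← C_1]; congr 1; field_simp
    have h2 : (C 2 * C (1 / s) * C N : MvPolynomial (Fin 2) ℂ) = -C d := by
      rw [← C_mul, ← C_mul, ← C_neg]
      congr 1; rw [hddef]; field_simp
    rw [hadef, hbdef, hsub]
    linear_combination h2 * X 0 ^ (m + 2) + h1 * X 1
  -- Q and its basics
  set Q := MvPolynomial (Fin 2) ℂ ⧸ I with hQdef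
  set z : Q := Ideal.Quotient.mk I (X 0) with hzdef
  have hz : Polynomial.aeval z g = 0 := by
    rw [hgdef]
    simp only [map_add, map_pow, Polynomial.aeval_X, Polynomial.aeval_C]
    have hA : (algebraMap ℂ Q) c = Ideal.Quotient.mk I (C c) := rfl
    rw [hzdef, hA, ← map_pow, ← map_add, Ideal.Quotient.eq_zero_iff_mem]
    exact mem1
  -- AdjoinRoot side
  set r : AdjoinRoot g := AdjoinRoot.root g with hrdef
  have hroot : r ^ (m + 3) = -algebraMap ℂ (AdjoinRoot g) c := by
    have h0 : AdjoinRoot.mk g (Polynomial.X ^ (m + 3) + Polynomial.C c) = 0 := by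
      rw [← hgdef]; exact AdjoinRoot.mk_self
    simp only [map_add, map_pow, AdjoinRoot.mk_X, AdjoinRoot.mk_C,
      ← AdjoinRoot.algebraMap_eq, ← hrdef] at h0
    linear_combination h0
  -- forward algebra hom
  set w' : AdjoinRoot g := algebraMap ℂ (AdjoinRoot g) d * r ^ (m + 2) with hwdef
  set φ : MvPolynomial (Fin 2) ℂ →ₐ[ℂ] AdjoinRoot g := MvPolynomial.aeval ![r, w'] with hφdef
  have hφ0 : φ (X 0) = r := by simp [hφdef]
  have hφ1 : φ (X 1) = w' := by simp [hφdef]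
  have key1 : (algebraMap ℂ (AdjoinRoot g)) N
      - (algebraMap ℂ (AdjoinRoot g)) d ^ 2 * (algebraMap ℂ (AdjoinRoot g)) c = 0 := by
    rw [← map_pow, ← map_mul, ← map_sub]
    have : N - d ^ 2 * c = 0 := by
      rw [hddef, hcdef]; field_simp; ring
    rw [this, map_zero]
  have key2 : (2 : AdjoinRoot g) * (algebraMap ℂ (AdjoinRoot g)) d
      * (algebraMap ℂ (AdjoinRoot g)) c + (algebraMap ℂ (AdjoinRoot g)) s = 0 := by
    have h : 2 * d * c + s = 0 := by
      rw [hddef, hcdef]; field_simp; ring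
    have := congrArg (algebraMap ℂ (AdjoinRoot g)) h
    rw [map_add, map_mul, map_mul, map_ofNat, map_zero] at this
    exact this
  have ha0 : φ a = 0 := by
    rw [hadef, hsub]
    simp only [map_add, map_mul, map_pow, hφ0, hφ1]
    rw [show (C ((m + 2 : ℕ) : ℂ) : MvPolynomial (Fin 2) ℂ) = C N from rfl]
    rw [hφdef]
    simp only [MvPolynomial.aeval_C]
    rw [hwdef]
    linear_combination r ^ (m + 1) * key1
      + (algebraMap ℂ (AdjoinRoot g)) d ^ 2 * r ^ (m + 1) * hroot
  have hb0 : φ b = 0 := by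
    rw [hbdef]
    simp only [map_sub, map_mul, hφ0, hφ1]
    rw [hφdef]
    simp only [MvPolynomial.aeval_C, map_ofNat]
    rw [hwdef]
    linear_combination 2 * (algebraMap ℂ (AdjoinRoot g)) d * hroot - key2
  have hker : ∀ p ∈ I, φ p = 0 := by
    intro p hp
    rw [hIdef, Ideal.mem_span_pair] at hp
    obtain ⟨u, v, rfl⟩ := hp
    simp [ha0, hb0]
  set Φ : Q →ₐ[ℂ] AdjoinRoot g := Ideal.Quotient.liftₐ I φ hker with hΦdef
  set ψ : AdjoinRoot g →ₐ[ℂ] Q := AdjoinRoot.liftAlgHom g (Algebra.ofId ℂ Q) z (by simpa [Polynomial.aeval_def] using hz) with hψdef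
  have hΦmk : ∀ p, Φ (Ideal.Quotient.mk I p) = φ p := fun p => by
    rw [hΦdef]; exact Ideal.Quotient.liftₐ_apply I φ hker _ ▸ Ideal.Quotient.lift_mk I _ _
  have comp1 : Φ.comp ψ = AlgHom.id ℂ (AdjoinRoot g) := by
    apply AdjoinRoot.algHom_ext
    rw [AlgHom.comp_apply, hψdef, AdjoinRoot.liftAlgHom_root, hzdef, hΦmk, hφ0]
    simp [hrdef]
  have comp2 : ψ.comp Φ = AlgHom.id ℂ Q := by
    apply Ideal.Quotient.algHom_ext
    apply MvPolynomial.algHom_ext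
    intro i
    fin_cases i
    · show ψ (Φ (Ideal.Quotient.mk I (X 0))) = Ideal.Quotient.mk I (X 0)
      rw [hΦmk, hφ0, hrdef, hψdef]
      apply AdjoinRoot.liftAlgHom_root
    · show ψ (Φ (Ideal.Quotient.mk I (X 1))) = Ideal.Quotient.mk I (X 1)
      rw [hΦmk, hφ1, hwdef, hψdef]
      have hr : (AdjoinRoot.liftAlgHom g (Algebra.ofId ℂ Q) z hz) r = z := by
        rw [hrdef]; apply AdjoinRoot.liftAlgHom_root
      rw [map_mul, map_pow, hr, AlgHom.commutes]
      have hA : (algebraMap ℂ Q) d = Ideal.Quotient.mk I (C d) := rfl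
      rw [hA, hzdef, ← map_pow, ← map_mul]
      symm
      rw [Ideal.Quotient.mk_eq_mk_iff_sub_mem]
      exact mem2
  set e : Q ≃ₐ[ℂ] AdjoinRoot g := AlgEquiv.ofAlgHom Φ ψ comp1 comp2 with hedef
  have hg0 : g ≠ 0 := by
    rw [hgdef]
    exact Polynomial.X_pow_add_C_ne_zero (by norm_num) c
  have h1 : Module.finrank ℂ Q = Module.finrank ℂ (AdjoinRoot g) :=
    e.toLinearEquiv.finrank_eq
  have h2 : Module.finrank ℂ (AdjoinRoot g) = g.natDegree := by
    rw [PowerBasis.finrank (AdjoinRoot.powerBasis hg0), AdjoinRoot.powerBasis_dim]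
  have h3 : g.natDegree = m + 3 := by
    rw [hgdef]; exact Polynomial.natDegree_X_pow_add_C
  show Module.finrank ℂ Q = m + 2 + 1
  rw [h1, h2, h3]
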